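/- Let V and A be finite-dimensional complex Hilbert spaces, let σ, σ' be density operators on V, and let ρ be a density operator on A ⊗ V with partial trace over A equal to σ. Then there exists a density operator ρ' on A ⊗ V with partial trace over A equal to σ' and F(ρ, ρ') = F(σ, σ'), where F denotes the fidelity. -/

import Mathlib

open scoped ComplexOrder
open Matrix


noncomputable def msqrt {n : Type*} [Fintype n] [DecidableEq n] (A : Matrix n n ℂ) :
    Matrix n n ℂ := by
  classical exact if h : A.PosSemidef then
    (h.1.eigenvectorUnitary : Matrix n n ℂ) * diagonal ((↑) ∘ (√·) ∘ h.1.eigenvalues) *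
      (star h.1.eigenvectorUnitary : Matrix n n ℂ) else 0

noncomputable def traceNorm {n : Type*} [Fintype n] [DecidableEq n] (A : Matrix n n ℂ) : ℝ :=
  (msqrt (Aᴴ * A)).trace.re

noncomputable def fidelity {n : Type*} [Fintype n] [DecidableEq n] (ρ ξ : Matrix n n ℂ) : ℝ :=
  (msqrt (msqrt ρ * ξ * msqrt ρ)).trace.re

noncomputable def buresAngle {n : Type*} [Fintype n] [DecidableEq n] (ρ ξ : Matrix n n ℂ) : ℝ :=
  Real.arccos (fidelity ρ ξ)

def IsDensity {n : Type*} [Fintype n] (A : Matrix n n ℂ) : Prop :=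
  A.PosSemidef ∧ A.trace = 1

def IsMeasurementOp {n : Type*} [Fintype n] [DecidableEq n] (P : Matrix n n ℂ) : Prop :=
  P.PosSemidef ∧ (1 - P).PosSemidef

/-- Partial trace over the first tensor factor. -/
noncomputable def partialTraceA {a v : Type*} [Fintype a] [Fintype v]
    (ρ : Matrix (a × v) (a × v) ℂ) : Matrix v v ℂ :=
  fun i j => ∑ x : a, ρ (x, i) (x, j)


set_option linter.unusedSectionVars false
set_option maxHeartbeats 1000000

namespace UhlAux

section Basic
variable {n : Type*} [Fintype n] [DecidableEq n]

variable {n : Type*} [Fintype n] [DecidableEq n]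

noncomputable def cd {A : Matrix n n ℂ} (hA : A.IsHermitian) (f : n → ℂ) : Matrix n n ℂ :=
  (hA.eigenvectorUnitary : Matrix n n ℂ) * diagonal f * (star (hA.eigenvectorUnitary : Matrix n n ℂ))

lemma cd_mul {A : Matrix n n ℂ} (hA : A.IsHermitian) (f g : n → ℂ) :
    cd hA f * cd hA g = cd hA (fun i => f i * g i) := by
  unfold cd
  have h1 : (star (hA.eigenvectorUnitary : Matrix n n ℂ)) *
      (hA.eigenvectorUnitary : Matrix n n ℂ) = 1 :=
    Matrix.mem_unitaryGroup_iff'.mp (hA.eigenvectorUnitary).2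
  calc (hA.eigenvectorUnitary : Matrix n n ℂ) * diagonal f *
        (star (hA.eigenvectorUnitary : Matrix n n ℂ)) *
        ((hA.eigenvectorUnitary : Matrix n n ℂ) * diagonal g *
        (star (hA.eigenvectorUnitary : Matrix n n ℂ)))
      = (hA.eigenvectorUnitary : Matrix n n ℂ) * diagonal f *
        ((star (hA.eigenvectorUnitary : Matrix n n ℂ)) *
        (hA.eigenvectorUnitary : Matrix n n ℂ)) * diagonal g *
        (star (hA.eigenvectorUnitary : Matrix n n ℂ)) := by
        simp only [Matrix.mul_assoc]
    _ = (hA.eigenvectorUnitary : Matrix n n ℂ) * (diagonal f * diagonal g) *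
        (star (hA.eigenvectorUnitary : Matrix n n ℂ)) := by
        rw [h1]; simp only [Matrix.mul_one, Matrix.mul_assoc]
    _ = _ := by rw [diagonal_mul_diagonal]

lemma cd_conjTranspose {A : Matrix n n ℂ} (hA : A.IsHermitian) (f : n → ℂ) :
    (cd hA f)ᴴ = cd hA (fun i => star (f i)) := by
  unfold cd
  simp only [conjTranspose_mul, diagonal_conjTranspose, star_eq_conjTranspose,
    conjTranspose_conjTranspose, Matrix.mul_assoc]
  rfl

noncomputable def ev {A : Matrix n n ℂ} (hA : A.IsHermitian) : n → ℂ :=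
  fun i => (hA.eigenvalues i : ℂ)

noncomputable def iv {A : Matrix n n ℂ} (hA : A.IsHermitian) : n → ℂ :=
  fun i => ((hA.eigenvalues i : ℂ))⁻¹

lemma cd_self {A : Matrix n n ℂ} (hA : A.IsHermitian) :
    A = cd hA (ev hA) := hA.spectral_theorem

noncomputable def pinv (A : Matrix n n ℂ) : Matrix n n ℂ := by
  classical exact if h : A.IsHermitian then cd h (iv h) else 0

lemma pinv_eq {A : Matrix n n ℂ} (hA : A.IsHermitian) :
    pinv A = cd hA (iv hA) := dif_pos hA

lemma pinv_herm {A : Matrix n n ℂ} (hA : A.IsHermitian) : (pinv A)ᴴ = pinv A := by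
  rw [pinv_eq hA, cd_conjTranspose]
  refine congrArg (cd hA) (funext fun i => ?_)
  simp [iv]

lemma pinv_comm {A : Matrix n n ℂ} (hA : A.IsHermitian) : A * pinv A = pinv A * A := by
  have key : cd hA (ev hA) * cd hA (iv hA) = cd hA (iv hA) * cd hA (ev hA) := by
    simp only [cd_mul]
    refine congrArg (cd hA) (funext fun i => ?_)
    simp only [ev, iv]
    ring
  rw [← cd_self hA, ← pinv_eq hA] at key
  exact key

lemma proj_mul_self {A : Matrix n n ℂ} (hA : A.IsHermitian) : (A * pinv A) * A = A := by
  have key : cd hA (ev hA) * cd hA (iv hA) * cd hA (ev hA) = cd hA (ev hA) := by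
    simp only [cd_mul]
    refine congrArg (cd hA) (funext fun i => ?_)
    simp only [ev, iv]
    by_cases h : (hA.eigenvalues i : ℂ) = 0
    · simp [h]
    · field_simp
  rw [← cd_self hA, ← pinv_eq hA] at key
  exact key

lemma proj_idem {A : Matrix n n ℂ} (hA : A.IsHermitian) : (A * pinv A) * (A * pinv A) = A * pinv A := by
  have key : cd hA (ev hA) * cd hA (iv hA) * (cd hA (ev hA) * cd hA (iv hA)) = cd hA (ev hA) * cd hA (iv hA) := by
    simp only [cd_mul]
    refine congrArg (cd hA) (funext fun i => ?_)
    simp only [ev, iv]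
    by_cases h : (hA.eigenvalues i : ℂ) = 0
    · simp [h]
    · field_simp
  rw [← cd_self hA, ← pinv_eq hA] at key
  exact key

lemma pinv_sq_mid {A : Matrix n n ℂ} (hA : A.IsHermitian) : pinv A * (A * A) * pinv A = A * pinv A := by
  have key : cd hA (iv hA) * (cd hA (ev hA) * cd hA (ev hA)) * cd hA (iv hA) = cd hA (ev hA) * cd hA (iv hA) := by
    simp only [cd_mul]
    refine congrArg (cd hA) (funext fun i => ?_)
    simp only [ev, iv]
    by_cases h : (hA.eigenvalues i : ℂ) = 0
    · simp [h]
    · field_simp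
  rw [← cd_self hA, ← pinv_eq hA] at key
  exact key

lemma pinv_mul_sq {A : Matrix n n ℂ} (hA : A.IsHermitian) : pinv A * (A * A) = A := by
  have key : cd hA (iv hA) * (cd hA (ev hA) * cd hA (ev hA)) = cd hA (ev hA) := by
    simp only [cd_mul]
    refine congrArg (cd hA) (funext fun i => ?_)
    simp only [ev, iv]
    by_cases h : (hA.eigenvalues i : ℂ) = 0
    · simp [h]
    · field_simp
  rw [← cd_self hA, ← pinv_eq hA] at key
  exact key

lemma sq_mul_pinv {A : Matrix n n ℂ} (hA : A.IsHermitian) : (A * A) * pinv A = A := by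
  have key : cd hA (ev hA) * cd hA (ev hA) * cd hA (iv hA) = cd hA (ev hA) := by
    simp only [cd_mul]
    refine congrArg (cd hA) (funext fun i => ?_)
    simp only [ev, iv]
    by_cases h : (hA.eigenvalues i : ℂ) = 0
    · simp [h]
    · field_simp
  rw [← cd_self hA, ← pinv_eq hA] at key
  exact key

lemma pinv_pinv_sq {A : Matrix n n ℂ} (hA : A.IsHermitian) : (pinv A * pinv A) * (A * A) * (pinv A * pinv A) = pinv A * pinv A := by
  have key : cd hA (iv hA) * cd hA (iv hA) * (cd hA (ev hA) * cd hA (ev hA)) * (cd hA (iv hA) * cd hA (iv hA)) = cd hA (iv hA) * cd hA (iv hA) := by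
    simp only [cd_mul]
    refine congrArg (cd hA) (funext fun i => ?_)
    simp only [ev, iv]
    by_cases h : (hA.eigenvalues i : ℂ) = 0
    · simp [h]
    · field_simp
  rw [← cd_self hA, ← pinv_eq hA] at key
  exact key

lemma proj_herm {A : Matrix n n ℂ} (hA : A.IsHermitian) : (A * pinv A)ᴴ = A * pinv A := by
  rw [conjTranspose_mul, pinv_herm hA, hA.eq, ← pinv_comm hA]


lemma psd_diag {A : Matrix n n ℂ} (hA : A.PosSemidef) (i : n) : 0 ≤ A i i := by
  exact hA.diag_nonneg

lemma psd_trace_nonneg {A : Matrix n n ℂ} (hA : A.PosSemidef) : 0 ≤ A.trace :=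
  Finset.sum_nonneg fun i _ => psd_diag hA i

lemma re_le_of_le {z w : ℂ} (h : z ≤ w) : z.re ≤ w.re := (Complex.le_def.mp h).1

lemma herm_idem_psd {P : Matrix n n ℂ} (h1 : Pᴴ = P) (h2 : P * P = P) : P.PosSemidef := by
  have := Matrix.posSemidef_conjTranspose_mul_self P
  rwa [h1, h2] at this

lemma psd_conj_sub {A B : Matrix n n ℂ} {m : Type*} [Fintype m]
    (hBA : (B - A).PosSemidef) (M : Matrix m n ℂ) :
    (M * B * Mᴴ - M * A * Mᴴ).PosSemidef := by
  have := hBA.mul_mul_conjTranspose_same M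
  rwa [Matrix.mul_sub, Matrix.sub_mul] at this

lemma mul_conjTranspose_trace_zero {m : Type*} [Fintype m] (W : Matrix n m ℂ)
    (h : (W * Wᴴ).trace = 0) : W = 0 := by
  have h1 : ∑ i : n, ∑ k : m, Complex.normSq (W i k) = 0 := by
    have h2 : (W * Wᴴ).trace = ((∑ i : n, ∑ k : m, Complex.normSq (W i k) : ℝ) : ℂ) := by
      simp only [Matrix.trace, Matrix.diag, mul_apply, conjTranspose_apply, Complex.star_def, Complex.mul_conj]
      push_cast
      rfl
    rw [h2] at h
    exact_mod_cast h
  ext i k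
  have h3 : ∀ i ∈ Finset.univ (α := n), ∑ k : m, Complex.normSq (W i k) = 0 := by
    intro i _
    have : ∀ j ∈ Finset.univ (α := n), 0 ≤ ∑ k : m, Complex.normSq (W j k) :=
      fun j _ => Finset.sum_nonneg fun k _ => Complex.normSq_nonneg _
    exact (Finset.sum_eq_zero_iff_of_nonneg this).mp h1 i (Finset.mem_univ i)
  have h4 := (Finset.sum_eq_zero_iff_of_nonneg
    (fun k _ => Complex.normSq_nonneg (W i k))).mp (h3 i (Finset.mem_univ i)) k (Finset.mem_univ k)
  simpa using Complex.normSq_eq_zero.mp h4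

lemma psd_trace_eq_zero {A : Matrix n n ℂ} (hA : A.PosSemidef) (h : A.trace = 0) : A = 0 := by
  exact hA.trace_eq_zero_iff.mp h

lemma psd_add_eq_zero {A B : Matrix n n ℂ} (hA : A.PosSemidef) (hB : B.PosSemidef)
    (h : A + B = 0) : A = 0 := by
  have ht : A.trace + B.trace = 0 := by
    rw [← Matrix.trace_add, h, Matrix.trace_zero]
  have h1 : A.trace = 0 := by
    have ha := psd_trace_nonneg hA
    have hb := psd_trace_nonneg hB
    have : A.trace ≤ 0 := by
      have : A.trace = -B.trace := by linear_combination ht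
      rw [this]; exact neg_nonpos.mpr hb
    exact le_antisymm this ha
  exact psd_trace_eq_zero hA h1

lemma nonneg_re {z : ℂ} (h : 0 ≤ z) : 0 ≤ z.re := by
  have := (Complex.le_def.mp h).1; simpa using this

lemma msqrt_eq {A : Matrix n n ℂ} (hA : A.PosSemidef) : msqrt A =
    cd hA.1 (fun i => ((√(hA.1.eigenvalues i) : ℝ) : ℂ)) := dif_pos hA

lemma msqrt_posSemidef {A : Matrix n n ℂ} (hA : A.PosSemidef) : (msqrt A).PosSemidef := by
  rw [msqrt_eq hA]; unfold cd; rw [star_eq_conjTranspose]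
  exact (PosSemidef.diagonal (fun i => Complex.zero_le_real.mpr (Real.sqrt_nonneg _))).mul_mul_conjTranspose_same _

lemma msqrt_mul_self {A : Matrix n n ℂ} (hA : A.PosSemidef) : msqrt A * msqrt A = A := by
  rw [msqrt_eq hA, cd_mul]; conv_rhs => rw [cd_self hA.1]
  refine congrArg (cd hA.1) (funext fun i => ?_)
  simp only [ev]; rw [← Complex.ofReal_mul, Real.mul_self_sqrt (hA.eigenvalues_nonneg i)]

lemma msqrt_herm {A : Matrix n n ℂ} (hA : A.PosSemidef) : (msqrt A)ᴴ = msqrt A :=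
  (msqrt_posSemidef hA).1

lemma one_sub_herm_idem_psd {P : Matrix n n ℂ} (h1 : Pᴴ = P) (h2 : P * P = P) :
    ((1 : Matrix n n ℂ) - P).PosSemidef := by
  refine herm_idem_psd ?_ ?_
  · rw [conjTranspose_sub, conjTranspose_one, h1]
  · simp only [Matrix.mul_sub, Matrix.sub_mul, Matrix.one_mul, Matrix.mul_one, h2]
    abel

lemma proj_psd {A : Matrix n n ℂ} (hA : A.IsHermitian) : (A * pinv A).PosSemidef :=
  herm_idem_psd (proj_herm hA) (proj_idem hA)

lemma one_sub_proj_psd {A : Matrix n n ℂ} (hA : A.IsHermitian) :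
    ((1 : Matrix n n ℂ) - A * pinv A).PosSemidef :=
  one_sub_herm_idem_psd (proj_herm hA) (proj_idem hA)

lemma proj_fix {c : Type*} [Fintype c] {P : Matrix n n ℂ} (hP : P.IsHermitian)
    {X : Matrix n c ℂ} (hX : ((P * P) - X * Xᴴ).PosSemidef) :
    (P * pinv P) * X = X := by
  set E := (1 : Matrix n n ℂ) - P * pinv P with hE
  have hEherm : Eᴴ = E := by
    rw [hE, conjTranspose_sub, conjTranspose_one, proj_herm hP]
  have hEP : E * P = 0 := by
    rw [hE, Matrix.sub_mul, Matrix.one_mul, proj_mul_self hP, sub_self]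
  have hkey : (E * X) * (E * X)ᴴ + E * ((P * P) - X * Xᴴ) * Eᴴ = 0 := by
    rw [conjTranspose_mul, hEherm]
    have e1 : (E * X) * (Xᴴ * E) + E * ((P * P) - X * Xᴴ) * E = E * (P * P) * E := by
      simp only [Matrix.mul_sub, Matrix.sub_mul, Matrix.mul_assoc]
      abel
    have e2 : E * (P * P) * E = 0 := by
      rw [← Matrix.mul_assoc, hEP, Matrix.zero_mul, Matrix.zero_mul]
    rw [e1, e2]
  have hZ0 : (E * X) * (E * X)ᴴ = 0 :=
    psd_add_eq_zero (Matrix.posSemidef_self_mul_conjTranspose _)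
      (hX.mul_mul_conjTranspose_same _) hkey
  have hZ : E * X = 0 := mul_conjTranspose_trace_zero _ (by rw [hZ0, Matrix.trace_zero])
  have : X - (P * pinv P) * X = 0 := by
    rw [← Matrix.one_mul X, ← Matrix.mul_assoc]
    simpa [hE, Matrix.sub_mul] using hZ
  have := sub_eq_zero.mp this
  simpa using this.symm

lemma trace_mul_psd_le {P W : Matrix n n ℂ} (hP : P.PosSemidef)
    (hW : ((1 : Matrix n n ℂ) - W).PosSemidef) : (P * W).trace.re ≤ P.trace.re := by
  have e1 : (msqrt P * (((1 : Matrix n n ℂ) - W) * msqrt P)).trace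
      = (P * ((1 : Matrix n n ℂ) - W)).trace := by
    rw [Matrix.trace_mul_comm, Matrix.mul_assoc, msqrt_mul_self hP, Matrix.trace_mul_comm]
  have psd1 : (msqrt P * (((1 : Matrix n n ℂ) - W) * msqrt P)).PosSemidef := by
    have := hW.mul_mul_conjTranspose_same (msqrt P)
    rw [msqrt_herm hP] at this
    rwa [Matrix.mul_assoc] at this
  have key : (0 : ℂ) ≤ (P * ((1 : Matrix n n ℂ) - W)).trace := by
    rw [← e1]; exact psd_trace_nonneg psd1
  have e2 : (P * ((1 : Matrix n n ℂ) - W)).trace = P.trace - (P * W).trace := by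
    rw [Matrix.mul_sub, Matrix.mul_one, Matrix.trace_sub]
  rw [e2] at key
  have := nonneg_re key
  simp only [Complex.sub_re] at this
  linarith

lemma contraction {c : Type*} [Fintype c] {P : Matrix n n ℂ} (hP : P.PosSemidef)
    {X : Matrix n c ℂ} (hX : ((P * P) - X * Xᴴ).PosSemidef) :
    ((1 : Matrix n n ℂ) - (pinv P * X) * (pinv P * X)ᴴ).PosSemidef := by
  have h1 : (pinv P * X) * (pinv P * X)ᴴ = pinv P * (X * Xᴴ) * (pinv P)ᴴ := by
    rw [conjTranspose_mul]
    simp only [Matrix.mul_assoc]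
  have h2 := psd_conj_sub hX (pinv P)
  have h3 : pinv P * (P * P) * (pinv P)ᴴ = P * pinv P := by
    rw [pinv_herm hP.1]; exact pinv_sq_mid hP.1
  rw [h3] at h2
  have h4 := (one_sub_proj_psd hP.1).add h2
  rw [sub_add_sub_cancel] at h4
  rw [h1]
  exact h4

lemma sandwich {C D : Matrix n n ℂ} (hC : ((1 : Matrix n n ℂ) - C * Cᴴ).PosSemidef)
    (hD : ((1 : Matrix n n ℂ) - D).PosSemidef) :
    ((1 : Matrix n n ℂ) - C * D * Cᴴ).PosSemidef := by
  have h2 := psd_conj_sub hD C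
  rw [Matrix.mul_one] at h2
  have h4 := hC.add h2
  rwa [sub_add_sub_cancel] at h4

end Basic

section CS
variable {d e : Type*} [Fintype d] [Fintype e]

lemma trace_form (X Y : Matrix d e ℂ) :
    (Xᴴ * Y).trace = ∑ p : d × e, (starRingEnd ℂ) (X p.1 p.2) * Y p.1 p.2 := by
  rw [Fintype.sum_prod_type]
  simp only [Matrix.trace, Matrix.diag, mul_apply, conjTranspose_apply]
  rw [Finset.sum_comm]
  rfl

lemma trace_CS (X Y : Matrix d e ℂ) :
    ((Xᴴ * Y).trace).re ≤ Real.sqrt ((Xᴴ * X).trace.re) * Real.sqrt ((Yᴴ * Y).trace.re) := by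
  let x : EuclideanSpace ℂ (d × e) := WithLp.toLp 2 (fun p : d × e => X p.1 p.2)
  let y : EuclideanSpace ℂ (d × e) := WithLp.toLp 2 (fun p : d × e => Y p.1 p.2)
  have hxy : (Xᴴ * Y).trace = inner (𝕜 := ℂ) x y := by
    rw [trace_form]
    rw [PiLp.inner_apply]
    exact Finset.sum_congr rfl fun p _ => by simp [x, y, mul_comm]
  have hxx : (Xᴴ * X).trace = inner (𝕜 := ℂ) x x := by
    rw [trace_form, PiLp.inner_apply]; exact Finset.sum_congr rfl fun p _ => by simp [x, y, mul_comm, Complex.mul_conj']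
  have hyy : (Yᴴ * Y).trace = inner (𝕜 := ℂ) y y := by
    rw [trace_form, PiLp.inner_apply]; exact Finset.sum_congr rfl fun p _ => by simp [x, y, mul_comm, Complex.mul_conj']
  have h1 : ((Xᴴ * Y).trace).re ≤ ‖inner (𝕜 := ℂ) x y‖ := by
    rw [hxy]
    exact Complex.re_le_norm _
  have h2 : ‖inner (𝕜 := ℂ) x y‖ ≤ ‖x‖ * ‖y‖ := norm_inner_le_norm x y
  have hx : ‖x‖ = Real.sqrt ((Xᴴ * X).trace.re) := by
    rw [@norm_eq_sqrt_re_inner ℂ]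
    rw [← hxx]
    rfl
  have hy : ‖y‖ = Real.sqrt ((Yᴴ * Y).trace.re) := by
    rw [@norm_eq_sqrt_re_inner ℂ]
    rw [← hyy]
    rfl
  calc ((Xᴴ * Y).trace).re ≤ ‖inner (𝕜 := ℂ) x y‖ := h1
    _ ≤ ‖x‖ * ‖y‖ := h2
    _ = _ := by rw [hx, hy]

end CS

section L1

variable {n c : Type*} [Fintype n] [DecidableEq n] [Fintype c] [DecidableEq c]

lemma overlap_le_fidelity {ρ ξ : Matrix n n ℂ} (hρ : ρ.PosSemidef) (hξ : ξ.PosSemidef)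
    {K M : Matrix n c ℂ} (hK : (ρ - K * Kᴴ).PosSemidef) (hM : (ξ - M * Mᴴ).PosSemidef) :
    ((K * Mᴴ).trace).re ≤ fidelity ρ ξ := by
  obtain ⟨Q, hQdef⟩ : ∃ X, X = msqrt ρ := ⟨_, rfl⟩
  obtain ⟨R, hRdef⟩ : ∃ X, X = msqrt ξ := ⟨_, rfl⟩
  obtain ⟨S, hSdef⟩ : ∃ X, X = msqrt (Q * ξ * Q) := ⟨_, rfl⟩
  have hQ : Q.PosSemidef := by rw [hQdef]; exact msqrt_posSemidef hρ
  have hR : R.PosSemidef := by rw [hRdef]; exact msqrt_posSemidef hξ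
  have hQQ : Q * Q = ρ := by rw [hQdef]; exact msqrt_mul_self hρ
  have hRR : R * R = ξ := by rw [hRdef]; exact msqrt_mul_self hξ
  have hQξQpsd : (Q * ξ * Q).PosSemidef := by
    have := hξ.mul_mul_conjTranspose_same Q
    rwa [hQ.1.eq] at this
  have hS : S.PosSemidef := by rw [hSdef]; exact msqrt_posSemidef hQξQpsd
  have hSS : S * S = Q * ξ * Q := by rw [hSdef]; exact msqrt_mul_self hQξQpsd
  have hfid : fidelity ρ ξ = S.trace.re := by rw [hSdef, hQdef]; rfl
  have hQRQR : (Q * R) * (Q * R)ᴴ = S * S := by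
    rw [conjTranspose_mul, hQ.1.eq, hR.1.eq, hSS]
    calc Q * R * (R * Q) = Q * (R * R) * Q := by simp only [Matrix.mul_assoc]
      _ = Q * ξ * Q := by rw [hRR]
  obtain ⟨Ck, hCkdef⟩ : ∃ X, X = pinv Q * K := ⟨_, rfl⟩
  obtain ⟨Cm, hCmdef⟩ : ∃ X, X = pinv R * M := ⟨_, rfl⟩
  obtain ⟨C3, hC3def⟩ : ∃ X, X = pinv S * (Q * R) := ⟨_, rfl⟩
  have hKeq : K = Q * Ck := by
    rw [hCkdef, ← Matrix.mul_assoc]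
    exact (proj_fix hQ.1 (by rw [hQQ]; exact hK)).symm
  have hMeq : M = R * Cm := by
    rw [hCmdef, ← Matrix.mul_assoc]
    exact (proj_fix hR.1 (by rw [hRR]; exact hM)).symm
  have hQReq : Q * R = S * C3 := by
    rw [hC3def, ← Matrix.mul_assoc]
    refine (proj_fix hS.1 ?_).symm
    rw [hQRQR, sub_self]
    exact Matrix.PosSemidef.zero
  obtain ⟨W, hWdef⟩ : ∃ X, X = msqrt S := ⟨_, rfl⟩
  have hWpsd : W.PosSemidef := by rw [hWdef]; exact msqrt_posSemidef hS
  have hWW : W * W = S := by rw [hWdef]; exact msqrt_mul_self hS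
  have hRQ : R * Q = C3ᴴ * S := by
    have h := congrArg conjTranspose hQReq
    rw [conjTranspose_mul, conjTranspose_mul, hQ.1.eq, hR.1.eq, hS.1.eq] at h
    exact h
  have hMconj : Mᴴ = Cmᴴ * R := by
    rw [hMeq, conjTranspose_mul, hR.1.eq]
  have htr : (K * Mᴴ).trace = ((W * C3 * Cm)ᴴ * (W * Ck)).trace := by
    rw [hKeq, hMconj]
    rw [show Q * Ck * (Cmᴴ * R) = (Q * Ck) * (Cmᴴ * R) from rfl, Matrix.trace_mul_comm]
    rw [conjTranspose_mul, conjTranspose_mul, hWpsd.1.eq]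
    simp only [Matrix.mul_assoc]
    rw [← Matrix.mul_assoc R Q Ck, hRQ, ← hWW]
    simp only [Matrix.mul_assoc]
  have hCk1 : ((1 : Matrix n n ℂ) - Ck * Ckᴴ).PosSemidef := by
    rw [hCkdef]; exact contraction hQ (by rw [hQQ]; exact hK)
  have hCm1 : ((1 : Matrix n n ℂ) - Cm * Cmᴴ).PosSemidef := by
    rw [hCmdef]; exact contraction hR (by rw [hRR]; exact hM)
  have hC31 : ((1 : Matrix n n ℂ) - C3 * C3ᴴ).PosSemidef := by
    rw [hC3def]
    refine contraction hS ?_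
    rw [hQRQR, sub_self]
    exact Matrix.PosSemidef.zero
  have hsand : ((1 : Matrix n n ℂ) - C3 * ((Cm * Cmᴴ) * C3ᴴ)).PosSemidef := by
    have := sandwich hC31 hCm1
    rwa [Matrix.mul_assoc] at this
  have trY : ((W * Ck)ᴴ * (W * Ck)).trace = (S * (Ck * Ckᴴ)).trace := by
    rw [conjTranspose_mul, hWpsd.1.eq]
    rw [show Ckᴴ * W * (W * Ck) = Ckᴴ * (W * W * Ck) from by simp only [Matrix.mul_assoc]]
    rw [hWW, Matrix.trace_mul_comm, Matrix.mul_assoc]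
  have trX : ((W * C3 * Cm)ᴴ * (W * C3 * Cm)).trace
      = (S * (C3 * ((Cm * Cmᴴ) * C3ᴴ))).trace := by
    rw [conjTranspose_mul, conjTranspose_mul, hWpsd.1.eq]
    rw [show Cmᴴ * (C3ᴴ * W) * (W * C3 * Cm) = Cmᴴ * (C3ᴴ * (W * W * (C3 * Cm))) from by
      simp only [Matrix.mul_assoc]]
    rw [hWW, Matrix.trace_mul_comm]
    rw [show C3ᴴ * (S * (C3 * Cm)) * Cmᴴ = C3ᴴ * (S * (C3 * (Cm * Cmᴴ))) from by
      simp only [Matrix.mul_assoc]]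
    rw [Matrix.trace_mul_comm]
    rw [show S * (C3 * (Cm * Cmᴴ)) * C3ᴴ = S * (C3 * ((Cm * Cmᴴ) * C3ᴴ)) from by
      simp only [Matrix.mul_assoc]]
  have hu : ((W * C3 * Cm)ᴴ * (W * C3 * Cm)).trace.re ≤ S.trace.re := by
    rw [trX]; exact trace_mul_psd_le hS hsand
  have hw : ((W * Ck)ᴴ * (W * Ck)).trace.re ≤ S.trace.re := by
    rw [trY]; exact trace_mul_psd_le hS hCk1
  have ht0 : 0 ≤ S.trace.re := nonneg_re (psd_trace_nonneg hS)
  calc ((K * Mᴴ).trace).re = (((W * C3 * Cm)ᴴ * (W * Ck)).trace).re := by rw [htr]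
    _ ≤ Real.sqrt (((W * C3 * Cm)ᴴ * (W * C3 * Cm)).trace.re)
        * Real.sqrt (((W * Ck)ᴴ * (W * Ck)).trace.re) := trace_CS _ _
    _ ≤ Real.sqrt (S.trace.re) * Real.sqrt (S.trace.re) :=
        mul_le_mul (Real.sqrt_le_sqrt hu) (Real.sqrt_le_sqrt hw)
          (Real.sqrt_nonneg _) (Real.sqrt_nonneg _)
    _ = S.trace.re := Real.mul_self_sqrt ht0
    _ = fidelity ρ ξ := hfid.symm

end L1

section L2
variable {n : Type*} [Fintype n] [DecidableEq n]

lemma fidelity_attained {ρ ρ' : Matrix n n ℂ} (hρ : ρ.PosSemidef) (hρ' : ρ'.PosSemidef) :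
    ∃ M : Matrix n n ℂ, (ρ' - M * Mᴴ).PosSemidef ∧
      ((msqrt ρ * Mᴴ).trace).re = fidelity ρ ρ' := by
  obtain ⟨Q, hQdef⟩ : ∃ X, X = msqrt ρ := ⟨_, rfl⟩
  obtain ⟨R, hRdef⟩ : ∃ X, X = msqrt ρ' := ⟨_, rfl⟩
  obtain ⟨S, hSdef⟩ : ∃ X, X = msqrt (Q * ρ' * Q) := ⟨_, rfl⟩
  have hQ : Q.PosSemidef := by rw [hQdef]; exact msqrt_posSemidef hρ
  have hR : R.PosSemidef := by rw [hRdef]; exact msqrt_posSemidef hρ'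
  have hQQ : Q * Q = ρ := by rw [hQdef]; exact msqrt_mul_self hρ
  have hRR : R * R = ρ' := by rw [hRdef]; exact msqrt_mul_self hρ'
  have hQξQpsd : (Q * ρ' * Q).PosSemidef := by
    have := hρ'.mul_mul_conjTranspose_same Q
    rwa [hQ.1.eq] at this
  have hS : S.PosSemidef := by rw [hSdef]; exact msqrt_posSemidef hQξQpsd
  have hSS : S * S = Q * ρ' * Q := by rw [hSdef]; exact msqrt_mul_self hQξQpsd
  have hfid : fidelity ρ ρ' = S.trace.re := by rw [hSdef, hQdef]; rfl
  have hmid : (Q * R) * (R * Q) = S * S := by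
    rw [hSS]
    calc Q * R * (R * Q) = Q * (R * R) * Q := by simp only [Matrix.mul_assoc]
      _ = Q * ρ' * Q := by rw [hRR]
  obtain ⟨C, hCdef⟩ : ∃ X, X = pinv S * (Q * R) := ⟨_, rfl⟩
  have hCherm : Cᴴ = (R * Q) * pinv S := by
    rw [hCdef, conjTranspose_mul, conjTranspose_mul, hQ.1.eq, hR.1.eq, pinv_herm hS.1]
  obtain ⟨M, hMdef⟩ : ∃ X, X = R * Cᴴ := ⟨_, rfl⟩
  have hMconj : Mᴴ = C * R := by
    rw [hMdef, conjTranspose_mul, conjTranspose_conjTranspose, hR.1.eq]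
  refine ⟨M, ?_, ?_⟩
  · have hMM : M * Mᴴ = R * (Cᴴ * C) * R := by
      rw [hMconj, hMdef]
      simp only [Matrix.mul_assoc]
    have hCC_idem : (Cᴴ * C) * (Cᴴ * C) = Cᴴ * C := by
      conv_lhs => rw [hCherm, hCdef]
      rw [show R * Q * pinv S * (pinv S * (Q * R)) * (R * Q * pinv S * (pinv S * (Q * R)))
          = (R * Q) * ((pinv S * pinv S) * ((Q * R) * (R * Q)) * (pinv S * pinv S)) * (Q * R)
          from by simp only [Matrix.mul_assoc]]
      rw [hmid, pinv_pinv_sq hS.1, hCherm, hCdef]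
      simp only [Matrix.mul_assoc]
    have hCC_herm : (Cᴴ * C)ᴴ = Cᴴ * C := by
      rw [conjTranspose_mul, conjTranspose_conjTranspose]
    have h1 : ((1 : Matrix n n ℂ) - Cᴴ * C).PosSemidef :=
      one_sub_herm_idem_psd hCC_herm hCC_idem
    have h2 := h1.mul_mul_conjTranspose_same R
    rw [hR.1.eq] at h2
    have h3 : R * ((1 : Matrix n n ℂ) - Cᴴ * C) * Rᴴ = ρ' - M * Mᴴ := by
      rw [hR.1.eq, hMM, Matrix.mul_sub, Matrix.sub_mul, Matrix.mul_one, hRR]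
    rw [hR.1.eq] at h3
    rwa [h3] at h2
  · have key : (Q * Mᴴ).trace = S.trace := by
      rw [hMconj]
      rw [show Q * (C * R) = (Q * C) * R from by simp only [Matrix.mul_assoc]]
      rw [Matrix.trace_mul_comm]
      rw [show R * (Q * C) = (R * Q) * C from by simp only [Matrix.mul_assoc]]
      rw [Matrix.trace_mul_comm, hCdef]
      rw [show (pinv S * (Q * R)) * (R * Q) = pinv S * ((Q * R) * (R * Q)) from by
        simp only [Matrix.mul_assoc]]
      rw [hmid, pinv_mul_sq hS.1]
    rw [← hQdef, key, hfid]

end L2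

section Flat
variable {a v c : Type*} [Fintype a] [Fintype v] [Fintype c]

/-- reshuffle a rectangular matrix, turning the `a` row index into a column index -/
def flat (X : Matrix (a × v) c ℂ) : Matrix v (a × c) ℂ := fun i p => X (p.1, i) p.2

lemma flat_mul_conjT (X Y : Matrix (a × v) c ℂ) :
    flat X * (flat Y)ᴴ = partialTraceA (X * Yᴴ) := by
  ext i j
  simp only [flat, mul_apply, conjTranspose_apply, partialTraceA]
  rw [Fintype.sum_prod_type]

lemma trace_flat (X Y : Matrix (a × v) c ℂ) :
    (X * Yᴴ).trace = (flat X * (flat Y)ᴴ).trace := by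
  simp only [Matrix.trace, Matrix.diag, mul_apply, conjTranspose_apply, flat,
    Fintype.sum_prod_type]
  rw [Finset.sum_comm]

lemma trace_partialTraceA (X : Matrix (a × v) (a × v) ℂ) :
    (partialTraceA X).trace = X.trace := by
  simp only [partialTraceA, Matrix.trace, Matrix.diag, Fintype.sum_prod_type]
  rw [Finset.sum_comm]

lemma partialTraceA_sub (X Y : Matrix (a × v) (a × v) ℂ) :
    partialTraceA (X - Y) = partialTraceA X - partialTraceA Y := by
  ext i j
  simp [partialTraceA, Finset.sum_sub_distrib]

lemma partialTraceA_psd [DecidableEq a] [DecidableEq v] {X : Matrix (a × v) (a × v) ℂ}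
    (hX : X.PosSemidef) : (partialTraceA X).PosSemidef := by
  have h : msqrt X * (msqrt X)ᴴ = X := by
    rw [msqrt_herm hX]; exact msqrt_mul_self hX
  rw [← h, ← flat_mul_conjT]
  exact Matrix.posSemidef_self_mul_conjTranspose _

end Flat

end UhlAux

open UhlAux in
/-- Preservation of subsystem fidelity: any extension `ρ` of `σ` admits an extension
`ρ'` of `σ'` with the same fidelity. -/
theorem preservation_of_subsystem_fidelity {a v : Type*}
    [Fintype a] [DecidableEq a] [Fintype v] [DecidableEq v]
    (σ σ' : Matrix v v ℂ) (hσ : IsDensity σ) (hσ' : IsDensity σ')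
    (ρ : Matrix (a × v) (a × v) ℂ) (hρ : IsDensity ρ)
    (hpt : partialTraceA ρ = σ) :
    ∃ ρ' : Matrix (a × v) (a × v) ℂ, IsDensity ρ' ∧ partialTraceA ρ' = σ' ∧
      fidelity ρ ρ' = fidelity σ σ' := by
  classical
  have hρpsd := hρ.1
  have hσpsd := hσ.1
  have hσ'psd := hσ'.1
  -- `a` is nonempty
  have hane : Nonempty a := by
    by_contra hne
    rw [not_nonempty_iff] at hne
    have h0 : ρ.trace = 0 := Matrix.trace_eq_zero_of_isEmpty ρ
    rw [hρ.2] at h0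
    exact one_ne_zero h0
  obtain ⟨a₀⟩ := hane
  -- padded square root of ρ
  obtain ⟨K, hKdef⟩ : ∃ X, X = msqrt ρ := ⟨_, rfl⟩
  have hKpsd : K.PosSemidef := by rw [hKdef]; exact msqrt_posSemidef hρpsd
  obtain ⟨K', hK'def⟩ : ∃ X : Matrix (a × v) ((a × v) ⊕ v) ℂ,
      X = Matrix.of fun p z => Sum.elim (K p) (fun _ => (0 : ℂ)) z := ⟨_, rfl⟩
  have hK'K' : K' * K'ᴴ = ρ := by
    have h1 : K' * K'ᴴ = K * Kᴴ := by
      ext p q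
      rw [hK'def]
      simp only [mul_apply, conjTranspose_apply, Matrix.of_apply]
      rw [Fintype.sum_sum_type]
      simp
    rw [h1, hKpsd.1.eq, hKdef]
    exact msqrt_mul_self hρpsd
  have hflatKK : flat K' * (flat K')ᴴ = σ := by
    rw [flat_mul_conjT, hK'K', hpt]
  -- square roots on the small space
  obtain ⟨Q, hQdef⟩ : ∃ X, X = msqrt σ := ⟨_, rfl⟩
  obtain ⟨R, hRdef⟩ : ∃ X, X = msqrt σ' := ⟨_, rfl⟩
  have hQ : Q.PosSemidef := by rw [hQdef]; exact msqrt_posSemidef hσpsd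
  have hR : R.PosSemidef := by rw [hRdef]; exact msqrt_posSemidef hσ'psd
  have hQQ : Q * Q = σ := by rw [hQdef]; exact msqrt_mul_self hσpsd
  have hRR : R * R = σ' := by rw [hRdef]; exact msqrt_mul_self hσ'psd
  have hQσQpsd : (Q * σ' * Q).PosSemidef := by
    have := hσ'psd.mul_mul_conjTranspose_same Q
    rwa [hQ.1.eq] at this
  obtain ⟨S, hSdef⟩ : ∃ X, X = msqrt (Q * σ' * Q) := ⟨_, rfl⟩
  have hS : S.PosSemidef := by rw [hSdef]; exact msqrt_posSemidef hQσQpsd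
  have hSS : S * S = Q * σ' * Q := by rw [hSdef]; exact msqrt_mul_self hQσQpsd
  have hfidσ : fidelity σ σ' = S.trace.re := by rw [hSdef, hQdef]; rfl
  have hmid : (Q * R) * (R * Q) = S * S := by
    rw [hSS]
    calc Q * R * (R * Q) = Q * (R * R) * Q := by simp only [Matrix.mul_assoc]
      _ = Q * σ' * Q := by rw [hRR]
  have hQRQR : (Q * R) * (Q * R)ᴴ = S * S := by
    rw [conjTranspose_mul, hQ.1.eq, hR.1.eq]
    exact hmid
  obtain ⟨C3, hC3def⟩ : ∃ X, X = pinv S * (Q * R) := ⟨_, rfl⟩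
  have hQReq : Q * R = S * C3 := by
    rw [hC3def, ← Matrix.mul_assoc]
    refine (proj_fix hS.1 ?_).symm
    rw [hQRQR, sub_self]
    exact Matrix.PosSemidef.zero
  obtain ⟨C1, hC1def⟩ : ∃ X, X = pinv Q * flat K' := ⟨_, rfl⟩
  have hC1C1 : C1 * C1ᴴ = Q * pinv Q := by
    rw [hC1def, conjTranspose_mul, pinv_herm hQ.1]
    rw [show pinv Q * flat K' * ((flat K')ᴴ * pinv Q)
        = pinv Q * (flat K' * (flat K')ᴴ) * pinv Q from by simp only [Matrix.mul_assoc]]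
    rw [hflatKK, ← hQQ]
    exact pinv_sq_mid hQ.1
  -- the fresh isometry G, orthogonal to the range of `flat K'`
  obtain ⟨G, hGdef⟩ : ∃ X : Matrix v (a × ((a × v) ⊕ v)) ℂ,
      X = Matrix.of fun i p => if p = (a₀, Sum.inr i) then (1 : ℂ) else 0 := ⟨_, rfl⟩
  have hGG : G * Gᴴ = 1 := by
    ext i j
    rw [hGdef]
    simp only [mul_apply, conjTranspose_apply, Matrix.of_apply, apply_ite (star (R := ℂ)), star_one, star_zero,
      ite_mul, one_mul, zero_mul, Finset.sum_ite_eq', Finset.mem_univ, if_true]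
    by_cases h : i = j
    · subst h; simp [Matrix.one_apply]
    · simp [Matrix.one_apply, h, Prod.ext_iff]
  have hKG : flat K' * Gᴴ = 0 := by
    ext i j
    rw [hGdef]
    simp only [mul_apply, conjTranspose_apply, Matrix.of_apply, apply_ite (star (R := ℂ)), star_one, star_zero,
      mul_ite, mul_one, mul_zero, Finset.sum_ite_eq', Finset.mem_univ, if_true]
    rw [hK'def]
    simp [flat]
  have hC1G : C1 * Gᴴ = 0 := by
    rw [hC1def, Matrix.mul_assoc, hKG, Matrix.mul_zero]
  have hGC1 : G * C1ᴴ = 0 := by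
    have h := congrArg conjTranspose hC1G
    rwa [conjTranspose_mul, conjTranspose_conjTranspose, conjTranspose_zero] at h
  -- the defect operator
  obtain ⟨D, hDdef⟩ : ∃ X, X = (1 : Matrix v v ℂ) - C3ᴴ * ((Q * pinv Q) * C3) := ⟨_, rfl⟩
  have hC3herm : C3ᴴ = (R * Q) * pinv S := by
    rw [hC3def, conjTranspose_mul, conjTranspose_mul, hQ.1.eq, hR.1.eq, pinv_herm hS.1]
  have hC3idem : (C3ᴴ * C3) * (C3ᴴ * C3) = C3ᴴ * C3 := by
    conv_lhs => rw [hC3herm, hC3def]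
    rw [show R * Q * pinv S * (pinv S * (Q * R)) * (R * Q * pinv S * (pinv S * (Q * R)))
        = (R * Q) * ((pinv S * pinv S) * ((Q * R) * (R * Q)) * (pinv S * pinv S)) * (Q * R)
        from by simp only [Matrix.mul_assoc]]
    rw [hmid, pinv_pinv_sq hS.1, hC3herm, hC3def]
    simp only [Matrix.mul_assoc]
  have hC3h : (C3ᴴ * C3)ᴴ = C3ᴴ * C3 := by
    rw [conjTranspose_mul, conjTranspose_conjTranspose]
  have hD : D.PosSemidef := by
    have h1 : ((1 : Matrix v v ℂ) - C3ᴴ * C3).PosSemidef :=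
      one_sub_herm_idem_psd hC3h hC3idem
    have h2 : (C3ᴴ * ((1 : Matrix v v ℂ) - Q * pinv Q) * C3).PosSemidef :=
      (one_sub_proj_psd hQ.1).conjTranspose_mul_mul_same C3
    have h3 : D = ((1 : Matrix v v ℂ) - C3ᴴ * C3)
        + C3ᴴ * ((1 : Matrix v v ℂ) - Q * pinv Q) * C3 := by
      rw [hDdef]
      simp only [Matrix.mul_sub, Matrix.sub_mul, Matrix.mul_one, Matrix.one_mul,
        Matrix.mul_assoc]
      abel
    rw [h3]
    exact h1.add h2
  have hTpsd : (R * D * R).PosSemidef := by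
    have := hD.mul_mul_conjTranspose_same R
    rwa [hR.1.eq] at this
  obtain ⟨A2, hA2def⟩ : ∃ X, X = msqrt (R * D * R) := ⟨_, rfl⟩
  have hA2psd : A2.PosSemidef := by rw [hA2def]; exact msqrt_posSemidef hTpsd
  have hA2A2 : A2 * A2 = R * D * R := by rw [hA2def]; exact msqrt_mul_self hTpsd
  -- the purification matrix
  obtain ⟨Mt, hMtdef⟩ : ∃ X, X = (R * C3ᴴ) * C1 + A2 * G := ⟨_, rfl⟩
  obtain ⟨Mf, hMfdef⟩ : ∃ X : Matrix (a × v) ((a × v) ⊕ v) ℂ,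
      X = fun p z => Mt p.2 (p.1, z) := ⟨_, rfl⟩
  have hflatM : flat Mf = Mt := by
    ext i p
    rw [hMfdef]
    rfl
  have hρ'psd : (Mf * Mfᴴ).PosSemidef := Matrix.posSemidef_self_mul_conjTranspose Mf
  -- partial trace of the new state
  have hMtMt : Mt * Mtᴴ = σ' := by
    rw [hMtdef]
    have hz1 : C1 * (Gᴴ * A2) = 0 := by rw [← Matrix.mul_assoc, hC1G, Matrix.zero_mul]
    have hz2 : G * (C1ᴴ * (C3 * R)) = 0 := by rw [← Matrix.mul_assoc, hGC1, Matrix.zero_mul]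
    have hg : G * (Gᴴ * A2) = A2 := by rw [← Matrix.mul_assoc, hGG, Matrix.one_mul]
    have hc : C1 * (C1ᴴ * (C3 * R)) = (Q * pinv Q) * (C3 * R) := by
      rw [← Matrix.mul_assoc, hC1C1]
    simp only [conjTranspose_add, conjTranspose_mul, conjTranspose_conjTranspose,
      hR.1.eq, hA2psd.1.eq]
    simp only [Matrix.add_mul, Matrix.mul_add, Matrix.mul_assoc]
    rw [hz1, hz2, hg, hc]
    simp only [Matrix.mul_zero, add_zero, zero_add]
    rw [hA2A2]
    rw [hDdef]
    simp only [Matrix.mul_sub, Matrix.sub_mul, Matrix.mul_one, Matrix.one_mul, Matrix.mul_assoc]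
    rw [← hRR]
    abel
  have hptM : partialTraceA (Mf * Mfᴴ) = σ' := by
    rw [← flat_mul_conjT, hflatM, hMtMt]
  -- the overlap computation
  have hover : (K' * Mfᴴ).trace = S.trace := by
    rw [trace_flat, hflatM, hMtdef]
    have hMth : ((R * C3ᴴ) * C1 + A2 * G)ᴴ = C1ᴴ * (C3 * R) + Gᴴ * A2 := by
      simp only [conjTranspose_add, conjTranspose_mul, conjTranspose_conjTranspose,
        hR.1.eq, hA2psd.1.eq, Matrix.mul_assoc]
    rw [hMth, Matrix.mul_add]
    have ht2 : flat K' * (Gᴴ * A2) = 0 := by rw [← Matrix.mul_assoc, hKG, Matrix.zero_mul]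
    have ht1 : flat K' * (C1ᴴ * (C3 * R)) = Q * (C3 * R) := by
      rw [hC1def, conjTranspose_mul, pinv_herm hQ.1]
      rw [show flat K' * ((flat K')ᴴ * pinv Q * (C3 * R))
          = (flat K' * (flat K')ᴴ) * pinv Q * (C3 * R) from by simp only [Matrix.mul_assoc]]
      rw [hflatKK, ← hQQ, sq_mul_pinv hQ.1]
    rw [ht1, ht2, Matrix.trace_add, Matrix.trace_zero, add_zero]
    rw [show Q * (C3 * R) = (Q * C3) * R from by simp only [Matrix.mul_assoc]]
    rw [Matrix.trace_mul_comm]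
    rw [show R * (Q * C3) = (R * Q) * C3 from by simp only [Matrix.mul_assoc]]
    rw [Matrix.trace_mul_comm, hC3def]
    rw [show (pinv S * (Q * R)) * (R * Q) = pinv S * ((Q * R) * (R * Q)) from by
      simp only [Matrix.mul_assoc]]
    rw [hmid, pinv_mul_sq hS.1]
  refine ⟨Mf * Mfᴴ, ⟨hρ'psd, ?_⟩, hptM, ?_⟩
  · rw [← trace_partialTraceA, hptM, hσ'.2]
  · -- fidelity equality
    have hlow : fidelity σ σ' ≤ fidelity ρ (Mf * Mfᴴ) := by
      have h1 : (ρ - K' * K'ᴴ).PosSemidef := by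
        rw [hK'K', sub_self]; exact Matrix.PosSemidef.zero
      have h2 : (Mf * Mfᴴ - Mf * Mfᴴ).PosSemidef := by
        rw [sub_self]; exact Matrix.PosSemidef.zero
      have h3 := overlap_le_fidelity hρpsd hρ'psd h1 h2
      rw [hover] at h3
      rw [hfidσ]
      exact h3
    have hupp : fidelity ρ (Mf * Mfᴴ) ≤ fidelity σ σ' := by
      obtain ⟨M1, hM1le, hM1eq⟩ := fidelity_attained hρpsd hρ'psd
      have h1 : (σ - flat (msqrt ρ) * (flat (msqrt ρ))ᴴ).PosSemidef := by
        rw [flat_mul_conjT, msqrt_herm hρpsd, msqrt_mul_self hρpsd, hpt, sub_self]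
        exact Matrix.PosSemidef.zero
      have h2 : (σ' - flat M1 * (flat M1)ᴴ).PosSemidef := by
        rw [flat_mul_conjT, ← hptM, ← partialTraceA_sub]
        exact partialTraceA_psd hM1le
      have h3 := overlap_le_fidelity hσpsd hσ'psd h1 h2
      rw [← trace_flat] at h3
      rw [← hM1eq]
      exact h3
    exact le_antisymm hupp hlow
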